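/- Fix an initial state x ∈ ℝ^n, an input bound ε₀ ≥ 0, and a horizon N. Then the resilience metric under open-loop controllers satisfies: sup{ μ ≥ 0 : there exists a sequence u(0), …, u(N−1) ∈ ℝ^m with ‖u(i)‖∞ ≤ ε₀ such that for every disturbance sequence d(0), …, d(N−1) with ‖d(i)‖∞ ≤ μ, the trajectory x(0) = x, x(k+1) = A_k x(k) + B_k u(k) + d(k) satisfies G_k x(k) ≤ H_k for all k = 0, …, N } = sup{ μ ≥ 0 : there exist ũ(0), …, ũ(N−1) ∈ ℝ^m with ‖ũ(i)‖∞ ≤ 1 and a nonnegative matrix P ∈ ℝ^{(N+1)q × 2n(N+1)} with P A_b = μ E^{ol} and P B_b ≤ F^{ol}(x, ũ, ε₀) }. -/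

import Mathlib

open Matrix Finset

noncomputable section

/-- Ordered product `M (k-1) * M (k-2) * ⋯ * M i` (empty product = identity when `k ≤ i`). -/
def mprod {n : ℕ} (M : ℕ → Matrix (Fin n) (Fin n) ℝ) (i k : ℕ) :
    Matrix (Fin n) (Fin n) ℝ :=
  (((List.range' i (k - i)).reverse).map M).prod

def Abar {n m : ℕ} (A : ℕ → Matrix (Fin n) (Fin n) ℝ) (B : ℕ → Matrix (Fin n) (Fin m) ℝ)
    (α₁ : Matrix (Fin m) (Fin n) ℝ) (j : ℕ) : Matrix (Fin n) (Fin n) ℝ :=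
  A j + B j * α₁

def trajCL {n m : ℕ} (A : ℕ → Matrix (Fin n) (Fin n) ℝ) (B : ℕ → Matrix (Fin n) (Fin m) ℝ)
    (α₁ : Matrix (Fin m) (Fin n) ℝ) (α₂ : Fin m → ℝ) (d : ℕ → Fin n → ℝ)
    (x0 : Fin n → ℝ) : ℕ → Fin n → ℝ
  | 0 => x0
  | k + 1 =>
      (A k).mulVec (trajCL A B α₁ α₂ d x0 k)
        + (B k).mulVec (α₁.mulVec (trajCL A B α₁ α₂ d x0 k) + α₂) + d k

def Eblk {n : ℕ} (N : ℕ) (M : ℕ → Matrix (Fin n) (Fin n) ℝ) (k : ℕ) :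
    Matrix (Fin n) (Fin (N + 1) × Fin n) ℝ :=
  Matrix.of fun r jc =>
    if 1 ≤ (jc.1 : ℕ) ∧ (jc.1 : ℕ) ≤ k then mprod M (jc.1 : ℕ) k r jc.2 else 0

def Fblk {n m : ℕ} (A : ℕ → Matrix (Fin n) (Fin n) ℝ) (B : ℕ → Matrix (Fin n) (Fin m) ℝ)
    (α₁ : Matrix (Fin m) (Fin n) ℝ) (α₂ : Fin m → ℝ) (x : Fin n → ℝ) (k : ℕ) : Fin n → ℝ :=
  (mprod (Abar A B α₁) 0 k).mulVec x
    + ∑ i ∈ Finset.range k, (mprod (Abar A B α₁) (i + 1) k * B i).mulVec α₂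

def Ex {n m q : ℕ} (N : ℕ) (A : ℕ → Matrix (Fin n) (Fin n) ℝ)
    (B : ℕ → Matrix (Fin n) (Fin m) ℝ) (G : ℕ → Matrix (Fin q) (Fin n) ℝ)
    (α₁ : Matrix (Fin m) (Fin n) ℝ) :
    Matrix (Fin (N + 1) × Fin q) (Fin (N + 1) × Fin n) ℝ :=
  Matrix.of fun kr jc => (G (kr.1 : ℕ) * Eblk N (Abar A B α₁) (kr.1 : ℕ)) kr.2 jc

def Fx {n m q : ℕ} (N : ℕ) (A : ℕ → Matrix (Fin n) (Fin n) ℝ)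
    (B : ℕ → Matrix (Fin n) (Fin m) ℝ) (G : ℕ → Matrix (Fin q) (Fin n) ℝ)
    (H : ℕ → Fin q → ℝ) (α₁ : Matrix (Fin m) (Fin n) ℝ) (α₂ : Fin m → ℝ)
    (x : Fin n → ℝ) : Fin (N + 1) × Fin q → ℝ :=
  fun kr => H (kr.1 : ℕ) kr.2 - (G (kr.1 : ℕ)).mulVec (Fblk A B α₁ α₂ x (kr.1 : ℕ)) kr.2

def Au (m : ℕ) : Matrix (Fin m ⊕ Fin m) (Fin m) ℝ := Matrix.fromRows 1 (-1)

def Sk {n m : ℕ} (A : ℕ → Matrix (Fin n) (Fin n) ℝ) (B : ℕ → Matrix (Fin n) (Fin m) ℝ)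
    (α₁ : Matrix (Fin m) (Fin n) ℝ) (α₂ : Fin m → ℝ) (x : Fin n → ℝ) (k : ℕ) : Fin m → ℝ :=
  α₁.mulVec (Fblk A B α₁ α₂ x k) + α₂

def Ecl {n m q : ℕ} (N : ℕ) (A : ℕ → Matrix (Fin n) (Fin n) ℝ)
    (B : ℕ → Matrix (Fin n) (Fin m) ℝ) (G : ℕ → Matrix (Fin q) (Fin n) ℝ)
    (α₁ : Matrix (Fin m) (Fin n) ℝ) :
    Matrix ((Fin (N + 1) × Fin q) ⊕ (Fin N × (Fin m ⊕ Fin m))) (Fin (N + 1) × Fin n) ℝ :=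
  Matrix.fromRows (Ex N A B G α₁)
    (Matrix.of fun kr jc => (Au m * α₁ * Eblk N (Abar A B α₁) (kr.1 : ℕ)) kr.2 jc)

def Fcl {n m q : ℕ} (N : ℕ) (A : ℕ → Matrix (Fin n) (Fin n) ℝ)
    (B : ℕ → Matrix (Fin n) (Fin m) ℝ) (G : ℕ → Matrix (Fin q) (Fin n) ℝ)
    (H : ℕ → Fin q → ℝ) (α₁ : Matrix (Fin m) (Fin n) ℝ) (α₂ : Fin m → ℝ)
    (x : Fin n → ℝ) (ε : ℝ) : (Fin (N + 1) × Fin q) ⊕ (Fin N × (Fin m ⊕ Fin m)) → ℝ :=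
  Sum.elim (Fx N A B G H α₁ α₂ x)
    (fun kr => ε - (Au m).mulVec (Sk A B α₁ α₂ x (kr.1 : ℕ)) kr.2)

def AbM (N n : ℕ) :
    Matrix ((Fin (N + 1) × Fin n) ⊕ (Fin (N + 1) × Fin n)) (Fin (N + 1) × Fin n) ℝ :=
  Matrix.fromRows 1 (-1)

def BbV (N n : ℕ) : (Fin (N + 1) × Fin n) ⊕ (Fin (N + 1) × Fin n) → ℝ := fun _ => 1

def trajOL {n m : ℕ} (A : ℕ → Matrix (Fin n) (Fin n) ℝ) (B : ℕ → Matrix (Fin n) (Fin m) ℝ)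
    (u : ℕ → Fin m → ℝ) (d : ℕ → Fin n → ℝ) (x0 : Fin n → ℝ) : ℕ → Fin n → ℝ
  | 0 => x0
  | k + 1 => (A k).mulVec (trajOL A B u d x0 k) + (B k).mulVec (u k) + d k

def Eol {n q : ℕ} (N : ℕ) (A : ℕ → Matrix (Fin n) (Fin n) ℝ)
    (G : ℕ → Matrix (Fin q) (Fin n) ℝ) :
    Matrix (Fin (N + 1) × Fin q) (Fin (N + 1) × Fin n) ℝ :=
  Matrix.of fun kr jc => (G (kr.1 : ℕ) * Eblk N A (kr.1 : ℕ)) kr.2 jc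

def Fol {n m q : ℕ} (N : ℕ) (A : ℕ → Matrix (Fin n) (Fin n) ℝ)
    (B : ℕ → Matrix (Fin n) (Fin m) ℝ) (G : ℕ → Matrix (Fin q) (Fin n) ℝ)
    (H : ℕ → Fin q → ℝ) (x : Fin n → ℝ) (ut : ℕ → Fin m → ℝ) (ε : ℝ) :
    Fin (N + 1) × Fin q → ℝ :=
  fun kr => H (kr.1 : ℕ) kr.2
    - (G (kr.1 : ℕ)).mulVec ((mprod A 0 (kr.1 : ℕ)).mulVec x) kr.2
    - ε * (G (kr.1 : ℕ)).mulVec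
        (∑ i ∈ Finset.range (kr.1 : ℕ), (mprod A (i + 1) (kr.1 : ℕ) * B i).mulVec (ut i)) kr.2

lemma mprod_le (M : ℕ → Matrix (Fin n) (Fin n) ℝ) {i k : ℕ} (h : k ≤ i) :
    mprod M i k = 1 := by
  simp [mprod, Nat.sub_eq_zero_of_le h]

lemma mprod_succ (M : ℕ → Matrix (Fin n) (Fin n) ℝ) {i k : ℕ} (h : i ≤ k) :
    mprod M i (k + 1) = M k * mprod M i k := by
  have h1 : k + 1 - i = (k - i) + 1 := by omega
  have h2 : List.range' i ((k - i) + 1) = List.range' i (k - i) ++ [i + (k-i)] := by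
    rw [List.range'_1_concat]
  have h3 : i + (k - i) = k := by omega
  simp [mprod, h1, h2, h3]


def dvec {n : ℕ} (N : ℕ) (d : ℕ → Fin n → ℝ) : Fin (N + 1) × Fin n → ℝ :=
  fun jc => if 1 ≤ (jc.1 : ℕ) then d ((jc.1 : ℕ) - 1) jc.2 else 0

lemma Eol_mulVec {n q N : ℕ} (A : ℕ → Matrix (Fin n) (Fin n) ℝ)
    (G : ℕ → Matrix (Fin q) (Fin n) ℝ) (d : ℕ → Fin n → ℝ) (k : Fin (N+1)) (r : Fin q) :
    ((Eol N A G) *ᵥ (dvec N d)) (k, r)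
    = ∑ i ∈ Finset.range (k : ℕ), ((G (k : ℕ) * mprod A (i + 1) (k : ℕ)) *ᵥ (d i)) r := by
  have hj : ∀ j : Fin (N+1),
      (∑ c : Fin n, Eol N A G (k, r) (j, c) *
        (if 1 ≤ (j : ℕ) then d ((j : ℕ) - 1) c else 0))
      = if 1 ≤ (j : ℕ) ∧ (j : ℕ) ≤ (k : ℕ) then
          ((G (k : ℕ) * mprod A (j : ℕ) (k : ℕ)) *ᵥ (d ((j : ℕ) - 1))) r else 0 := by
    intro j
    by_cases hc : 1 ≤ (j : ℕ) ∧ (j : ℕ) ≤ (k : ℕ)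
    · rw [if_pos hc]
      simp only [Eol, Eblk, Matrix.of_apply, Matrix.mul_apply, if_pos hc, if_pos hc.1,
        Matrix.mulVec, dotProduct]
    · rw [if_neg hc]
      rcases Classical.em (1 ≤ (j : ℕ)) with h1 | h1
      · have : ¬ ((j : ℕ) ≤ (k : ℕ)) := fun h => hc ⟨h1, h⟩
        simp [Eol, Eblk, Matrix.of_apply, Matrix.mul_apply, if_neg hc]
        exact fun _ h3 => absurd h3 this
      · simp [h1]
  rw [Matrix.mulVec, dotProduct, Fintype.sum_prod_type]
  simp only [dvec]
  rw [Finset.sum_congr rfl (fun j _ => hj j)]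
  rw [Fin.sum_univ_eq_sum_range (fun j => if 1 ≤ j ∧ j ≤ (k : ℕ) then
      ((G (k : ℕ) * mprod A j (k : ℕ)) *ᵥ (d (j - 1))) r else 0) (N+1)]
  rw [← Finset.sum_filter]
  have hfil : (Finset.range (N+1)).filter (fun j => 1 ≤ j ∧ j ≤ (k : ℕ))
      = Finset.Ico 1 ((k : ℕ) + 1) := by
    ext j
    simp only [Finset.mem_filter, Finset.mem_range, Finset.mem_Ico]
    have := k.isLt
    omega
  rw [hfil, Finset.sum_Ico_eq_sum_range]
  simp only [Nat.add_sub_cancel_left, Nat.add_sub_cancel]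
  exact Finset.sum_congr rfl fun i hi => by rw [Nat.add_comm 1 i]

lemma traj_unroll {n m : ℕ} (A : ℕ → Matrix (Fin n) (Fin n) ℝ)
    (B : ℕ → Matrix (Fin n) (Fin m) ℝ) (u : ℕ → Fin m → ℝ) (d : ℕ → Fin n → ℝ)
    (x0 : Fin n → ℝ) (k : ℕ) :
    trajOL A B u d x0 k = (mprod A 0 k).mulVec x0
      + ∑ i ∈ Finset.range k, (mprod A (i + 1) k).mulVec ((B i).mulVec (u i) + d i) := by
  induction k with
  | zero => simp [trajOL, mprod_le]
  | succ k ih =>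
      rw [trajOL, ih, Finset.sum_range_succ, mprod_succ A (Nat.zero_le k),
        mprod_le A (le_refl (k+1))]
      simp only [Matrix.mulVec_add, Matrix.one_mulVec, ← Matrix.mulVec_mulVec]
      rw [show (A k) *ᵥ (∑ x ∈ Finset.range k, (mprod A (x + 1) k *ᵥ (B x *ᵥ u x) + mprod A (x+1) k *ᵥ d x)) = ∑ x ∈ Finset.range k, (A k) *ᵥ (mprod A (x + 1) k *ᵥ (B x *ᵥ u x) + mprod A (x+1) k *ᵥ d x) from map_sum (A k).mulVecLin _ _]
      have : ∀ i ∈ Finset.range k, (A k) *ᵥ (mprod A (i+1) k *ᵥ (B i *ᵥ u i) + mprod A (i+1) k *ᵥ d i)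
          = (mprod A (i+1) (k+1)) *ᵥ (B i *ᵥ u i) + mprod A (i+1) (k+1) *ᵥ d i := by
        intro i hi
        rw [mprod_succ A (by simp at hi; omega)]
        simp [Matrix.mulVec_add, Matrix.mulVec_mulVec, Matrix.mul_assoc]
      rw [Finset.sum_congr rfl this]
      abel

lemma key {n m q N : ℕ} (A : ℕ → Matrix (Fin n) (Fin n) ℝ)
    (B : ℕ → Matrix (Fin n) (Fin m) ℝ) (G : ℕ → Matrix (Fin q) (Fin n) ℝ)
    (H : ℕ → Fin q → ℝ) (x : Fin n → ℝ) (ε₀ : ℝ) (ut u : ℕ → Fin m → ℝ)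
    (d : ℕ → Fin n → ℝ) (k : Fin (N + 1))
    (hu : ∀ i, i < (k : ℕ) → u i = ε₀ • ut i) (r : Fin q) :
    ((G (k : ℕ)) *ᵥ (trajOL A B u d x (k : ℕ))) r
      = ((Eol N A G) *ᵥ (dvec N d)) (k, r)
        + (H (k : ℕ) r - Fol N A B G H x ut ε₀ (k, r)) := by
  rw [traj_unroll]
  have hsum : ∑ i ∈ Finset.range (k : ℕ), mprod A (i+1) (k : ℕ) *ᵥ ((B i) *ᵥ u i + d i)
      = ε₀ • (∑ i ∈ Finset.range (k : ℕ), (mprod A (i+1) (k : ℕ) * B i) *ᵥ ut i)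
        + ∑ i ∈ Finset.range (k : ℕ), mprod A (i+1) (k : ℕ) *ᵥ d i := by
    rw [Finset.smul_sum, ← Finset.sum_add_distrib]
    refine Finset.sum_congr rfl fun i hi => ?_
    rw [Matrix.mulVec_add, hu i (Finset.mem_range.mp hi), Matrix.mulVec_smul,
      Matrix.mulVec_smul, ← Matrix.mulVec_mulVec]
  rw [hsum]
  have hd : ((G (k : ℕ)) *ᵥ (∑ i ∈ Finset.range (k : ℕ), mprod A (i+1) (k : ℕ) *ᵥ d i)) r
      = ((Eol N A G) *ᵥ (dvec N d)) (k, r) := by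
    rw [show (G (k : ℕ)) *ᵥ (∑ i ∈ Finset.range (k : ℕ), mprod A (i+1) (k : ℕ) *ᵥ d i)
        = ∑ i ∈ Finset.range (k : ℕ), (G (k : ℕ)) *ᵥ (mprod A (i+1) (k : ℕ) *ᵥ d i)
      from map_sum (G (k : ℕ)).mulVecLin _ _]
    rw [Eol_mulVec A G d k r, Finset.sum_apply]
    exact Finset.sum_congr rfl fun i hi => by rw [← Matrix.mulVec_mulVec]
  simp only [Matrix.mulVec_add, Matrix.mulVec_smul, Pi.add_apply, Pi.smul_apply,
    smul_eq_mul, Matrix.mulVec_mulVec]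
  rw [show ((G (k : ℕ)) *ᵥ (∑ i ∈ Finset.range (k : ℕ), mprod A (i+1) (k : ℕ) *ᵥ d i)) r
      = ((Eol N A G) *ᵥ (dvec N d)) (k, r) from hd]
  simp only [Fol]
  ring_nf
  rw [Matrix.mulVec_mulVec]
  ring

/-- Resilience metric under open-loop controllers, with input bound `ε₀`: the supremum
of admissible disturbance bounds `μ` in the robust formulation (over input sequences
`u` with `‖u(i)‖∞ ≤ ε₀`) equals the supremum in the Farkas-certified formulation
(over normalized inputs `ũ` with `‖ũ(i)‖∞ ≤ 1`, applied inputs `u(i) = ε₀ ũ(i)`). -/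
theorem resilience_openLoop {n m q N : ℕ}
    (A : ℕ → Matrix (Fin n) (Fin n) ℝ) (B : ℕ → Matrix (Fin n) (Fin m) ℝ)
    (G : ℕ → Matrix (Fin q) (Fin n) ℝ) (H : ℕ → Fin q → ℝ)
    (x : Fin n → ℝ) (ε₀ : ℝ) (hε₀ : 0 ≤ ε₀) :
    sSup {μ : ℝ | 0 ≤ μ ∧ ∃ u : ℕ → Fin m → ℝ,
        (∀ i, i < N → ‖u i‖ ≤ ε₀) ∧
        ∀ d : ℕ → Fin n → ℝ, (∀ i, i < N → ‖d i‖ ≤ μ) →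
          ∀ k, k ≤ N → (G k).mulVec (trajOL A B u d x k) ≤ H k} =
    sSup {μ : ℝ | 0 ≤ μ ∧ ∃ (ut : ℕ → Fin m → ℝ)
        (P : Matrix (Fin (N + 1) × Fin q)
          ((Fin (N + 1) × Fin n) ⊕ (Fin (N + 1) × Fin n)) ℝ),
        (∀ i, i < N → ‖ut i‖ ≤ 1) ∧
        (∀ i j, 0 ≤ P i j) ∧
        P * AbM N n = μ • Eol N A G ∧
        P.mulVec (BbV N n) ≤ Fol N A B G H x ut ε₀} := by
  congr 1
  ext μ
  simp only [Set.mem_setOf_eq]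
  constructor
  · rintro ⟨hμ, u, hub, hrob⟩
    refine ⟨hμ, ?_⟩
    set ut : ℕ → Fin m → ℝ := fun i => if ε₀ = 0 then 0 else ε₀⁻¹ • u i with hutdef
    have huε : ∀ i, i < N → u i = ε₀ • ut i := by
      intro i hi
      by_cases h0 : ε₀ = 0
      · have h1 : ‖u i‖ ≤ 0 := h0 ▸ hub i hi
        have h2 : u i = 0 := norm_le_zero_iff.mp h1
        simp [hutdef, h0, h2]
      · simp [hutdef, h0, smul_smul, mul_inv_cancel₀ h0]
    refine ⟨ut, μ • Matrix.fromCols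
      (Matrix.of fun rr j => max (Eol N A G rr j) 0)
      (Matrix.of fun rr j => max (-(Eol N A G rr j)) 0), ?_, ?_, ?_, ?_⟩
    · intro i hi
      by_cases h0 : ε₀ = 0
      · simp [hutdef, h0]
      · have hε : 0 < ε₀ := lt_of_le_of_ne hε₀ (Ne.symm h0)
        have := hub i hi
        simp only [hutdef, if_neg h0]
        rw [norm_smul, Real.norm_eq_abs, abs_of_pos (inv_pos.mpr hε)]
        rw [inv_mul_le_iff₀ hε, mul_one]
        exact this
    · rintro rr (j | j) <;>
        simp only [Matrix.smul_apply, Matrix.fromCols, Matrix.of_apply,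
          smul_eq_mul] <;>
        exact mul_nonneg hμ (le_max_right _ _)
    · rw [AbM, Matrix.smul_mul, Matrix.fromCols_mul_fromRows]
      ext rr j
      simp only [Matrix.smul_apply, Matrix.add_apply, Matrix.mul_one, Matrix.mul_neg,
        Matrix.neg_apply, Matrix.of_apply, smul_eq_mul]
      rw [← sub_eq_add_neg, max_zero_sub_max_neg_zero_eq_self]
    · intro rr
      obtain ⟨k, r⟩ := rr
      set dd : ℕ → Fin n → ℝ :=
        fun i c => if 0 ≤ Eol N A G (k, r) ((open Fin.NatCast in ((i + 1 : ℕ) : Fin (N + 1))), c) then μ else -μ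
        with hdd
      have hdb : ∀ i, i < N → ‖dd i‖ ≤ μ := by
        intro i _
        rw [pi_norm_le_iff_of_nonneg hμ]
        intro c
        simp only [hdd, Real.norm_eq_abs]
        split_ifs with h <;> simp [abs_neg, abs_of_nonneg hμ]
      have hkN : (k : ℕ) ≤ N := Nat.lt_succ_iff.mp k.isLt
      have hG := hrob dd hdb (k : ℕ) hkN r
      have hu' : ∀ i, i < (k : ℕ) → u i = ε₀ • ut i :=
        fun i hi => huε i (lt_of_lt_of_le hi hkN)
      rw [key A B G H x ε₀ ut u dd k hu' r] at hG
      have h1 : (Eol N A G *ᵥ dvec N dd) (k, r) ≤ Fol N A B G H x ut ε₀ (k, r) := by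
        linarith
      refine le_trans (le_of_eq ?_) h1
      rw [Matrix.smul_mulVec]
      have hBb : BbV N n = Sum.elim (fun _ => (1 : ℝ)) (fun _ => (1 : ℝ)) := by
        ext (j | j) <;> rfl
      rw [hBb, Matrix.fromCols_mulVec_sumElim]
      simp only [Pi.smul_apply, Pi.add_apply, smul_eq_mul, Matrix.mulVec, dotProduct,
        Matrix.of_apply, mul_one]
      rw [← Finset.sum_add_distrib, Finset.mul_sum]
      refine Finset.sum_congr rfl fun jc _ => ?_
      obtain ⟨j, c⟩ := jc
      rw [max_zero_add_max_neg_zero_eq_abs_self]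
      by_cases hj : 1 ≤ (j : ℕ)
      · have hdv : dvec N dd (j, c) = if 0 ≤ Eol N A G (k, r) (j, c) then μ else -μ := by
          simp only [dvec, if_pos hj, hdd]
          have hj1 : ((j : ℕ) - 1) + 1 = (j : ℕ) := by omega
          rw [hj1, Fin.cast_val_eq_self]
        rw [hdv]
        by_cases hE : 0 ≤ Eol N A G (k, r) (j, c)
        · rw [if_pos hE, abs_of_nonneg hE]; ring
        · rw [if_neg hE, abs_of_neg (lt_of_not_ge hE)]; ring
      · have hj0 : (j : ℕ) = 0 := by omega
        have hE0 : Eol N A G (k, r) (j, c) = 0 := by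
          simp [Eol, Eblk, Matrix.mul_apply, hj0]
        simp [dvec, hj, hE0]
  · rintro ⟨hμ, ut, P, hub, hP0, hPA, hPB⟩
    refine ⟨hμ, fun i => ε₀ • ut i, ?_, ?_⟩
    · intro i hi
      rw [norm_smul, Real.norm_eq_abs, abs_of_nonneg hε₀]
      calc ε₀ * ‖ut i‖ ≤ ε₀ * 1 := mul_le_mul_of_nonneg_left (hub i hi) hε₀
        _ = ε₀ := mul_one _
    · intro d hd k hk r
      set kf : Fin (N + 1) := ⟨k, Nat.lt_succ_of_le hk⟩ with hkf
      have hkey := key A B G H x ε₀ ut (fun i => ε₀ • ut i) d kf (fun i _ => rfl) r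
      have hdv : ∀ jc : Fin (N + 1) × Fin n, |dvec N d jc| ≤ μ := by
        rintro ⟨j, c⟩
        by_cases hj : 1 ≤ (j : ℕ)
        · simp only [dvec, if_pos hj]
          have hjN : (j : ℕ) - 1 < N := by have := j.isLt; omega
          calc |d ((j : ℕ) - 1) c| = ‖d ((j : ℕ) - 1) c‖ := (Real.norm_eq_abs _).symm
            _ ≤ ‖d ((j : ℕ) - 1)‖ := norm_le_pi_norm _ c
            _ ≤ μ := hd _ hjN
        · simp only [dvec, if_neg hj, abs_zero]; exact hμ
      suffices h : (Eol N A G *ᵥ dvec N d) (kf, r) ≤ Fol N A B G H x ut ε₀ (kf, r) by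
        show ((G k) *ᵥ (trajOL A B (fun i => ε₀ • ut i) d x k)) r ≤ H k r
        have hkk : (kf : ℕ) = k := rfl
        rw [show ((G k) *ᵥ (trajOL A B (fun i => ε₀ • ut i) d x k)) r
            = ((G (kf : ℕ)) *ᵥ (trajOL A B (fun i => ε₀ • ut i) d x (kf : ℕ))) r from rfl,
          hkey]
        have : Fol N A B G H x ut ε₀ (kf, r) ≤ H (kf : ℕ) r - (Eol N A G *ᵥ dvec N d) (kf, r) ∨ True := Or.inr trivial
        linarith
      have hPB' := hPB (kf, r)
      have h0P : 0 ≤ (P *ᵥ BbV N n) (kf, r) := by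
        simp only [Matrix.mulVec, dotProduct, BbV, mul_one]
        exact Finset.sum_nonneg fun j _ => hP0 _ _
      by_cases hμ0 : μ = 0
      · have hdz : dvec N d = 0 := by
          funext jc
          have := hdv jc
          rw [hμ0] at this
          exact abs_eq_zero.mp (le_antisymm this (abs_nonneg _))
        rw [hdz, Matrix.mulVec_zero]
        exact le_trans h0P hPB'
      · have hμpos : 0 < μ := lt_of_le_of_ne hμ (Ne.symm hμ0)
        rw [← mul_le_mul_iff_right₀ hμpos]
        have e1 : μ * (Eol N A G *ᵥ dvec N d) (kf, r)
            = ((μ • Eol N A G) *ᵥ dvec N d) (kf, r) := by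
          rw [Matrix.smul_mulVec]; simp
        rw [e1, ← hPA, ← Matrix.mulVec_mulVec]
        have e2 : (AbM N n) *ᵥ dvec N d = Sum.elim (dvec N d) (-(dvec N d)) := by
          rw [AbM, Matrix.fromRows_mulVec, Matrix.one_mulVec, Matrix.neg_mulVec,
            Matrix.one_mulVec]
        rw [e2]
        calc (P *ᵥ Sum.elim (dvec N d) (-(dvec N d))) (kf, r)
            ≤ (P *ᵥ (fun _ => μ)) (kf, r) := by
              simp only [Matrix.mulVec, dotProduct]
              refine Finset.sum_le_sum fun j _ => ?_
              refine mul_le_mul_of_nonneg_left ?_ (hP0 _ _)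
              rcases j with j | j
              · exact le_trans (le_abs_self _) (hdv j)
              · simp only [Sum.elim_inr, Pi.neg_apply]
                exact neg_le.mpr (abs_le.mp (hdv j)).1
          _ = μ * (P *ᵥ BbV N n) (kf, r) := by
              simp only [Matrix.mulVec, dotProduct, BbV, mul_one, Finset.mul_sum]
              exact Finset.sum_congr rfl fun j _ => mul_comm _ _
          _ ≤ μ * Fol N A B G H x ut ε₀ (kf, r) := mul_le_mul_of_nonneg_left hPB' hμ
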